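/- Let (a_k)_{k∈ℕ} and (b_k)_{k∈ℕ} be sequences of complex numbers such that ∑_k a_k and ∑_k b_k converge in ℂ and ∑_k |a_k|² < ∞, ∑_k |b_k|² < ∞. If ∑_{k=0}^∞ a_k/(1 − a_k·z) = ∑_{k=0}^∞ b_k/(1 − b_k·z) for every z ∈ ℂ satisfying a_k·z ≠ 1 and b_k·z ≠ 1 for all k, then for every c ∈ ℂ with c ≠ 0 one has card{k ∈ ℕ : a_k = c} = card{k ∈ ℕ : b_k = c}; that is, the limit function determines the nonzero terms of the sequence together with their multiplicities. -/

import Mathlib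

open Filter Topology


private lemma key_lemma (a : ℕ → ℂ)
    (haconv : ∃ S : ℂ, Tendsto (fun N => ∑ k ∈ Finset.range N, a k) atTop (𝓝 S))
    (hasq : Summable fun k => ‖a k‖ ^ 2)
    (F : ℂ → ℂ)
    (hF : ∀ z : ℂ, (∀ k, a k * z ≠ 1) →
      Tendsto (fun N => ∑ k ∈ Finset.range N, a k / (1 - a k * z)) atTop (𝓝 (F z)))
    (c : ℂ) (hc : c ≠ 0) (z : ℕ → ℂ)
    (hz : Tendsto z atTop (𝓝 c⁻¹))
    (hzp : ∀ n k, a k * z n ≠ 1) :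
    Tendsto (fun n => (1 - c * z n) * F (z n)) atTop
      (𝓝 (c * (Nat.card {k : ℕ | a k = c}))) := by
  obtain ⟨S, hS⟩ := haconv
  have hcpos : (0:ℝ) < ‖c‖ := norm_pos_iff.2 hc
  -- terms tend to 0
  have ha0 : Tendsto a atTop (𝓝 0) := by
    have h1 := (hS.comp (tendsto_add_atTop_nat 1)).sub hS
    simpa [Finset.sum_range_succ] using h1
  -- the set of indices with a k = c is finite
  have hAfin : {k : ℕ | a k = c}.Finite := by
    have hev : ∀ᶠ k in atTop, a k ≠ c := ha0.eventually (eventually_ne_nhds hc.symm)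
    obtain ⟨N, hN⟩ := eventually_atTop.1 hev
    apply Set.Finite.subset (Finset.range N).finite_toSet
    intro k hk
    simp only [Set.mem_setOf_eq] at hk
    simp only [Finset.coe_range, Set.mem_Iio]
    by_contra h
    exact hN k (le_of_not_gt h) hk
  set A : Finset ℕ := hAfin.toFinset with hA
  have hmemA : ∀ k, k ∈ A ↔ a k = c := by
    intro k; simp [hA, Set.Finite.mem_toFinset]
  set m : ℕ := A.card with hm
  have hcard : Nat.card {k : ℕ | a k = c} = m := by
    rw [Nat.card_eq_card_finite_toFinset hAfin]
  -- uniform lower bound on denominators away from the poles of the `A`-part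
  obtain ⟨ε, hε, r, hr, hbound⟩ :
      ∃ ε > 0, ∃ r > 0, ∀ k ∉ A, ∀ w : ℂ, dist w c⁻¹ ≤ r → ε ≤ ‖1 - a k * w‖ := by
    have hBfin : {k : ℕ | ‖c‖ / 2 ≤ ‖a k‖}.Finite := by
      have hev : ∀ᶠ k in atTop, ‖a k‖ < ‖c‖ / 2 := by
        have := Metric.tendsto_atTop.1 ha0 (‖c‖ / 2) (by positivity)
        obtain ⟨N, hN⟩ := this
        filter_upwards [eventually_ge_atTop N] with k hk
        simpa [dist_eq_norm] using hN k hk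
      obtain ⟨N, hN⟩ := eventually_atTop.1 hev
      apply Set.Finite.subset (Finset.range N).finite_toSet
      intro k hk
      simp only [Set.mem_setOf_eq] at hk
      simp only [Finset.coe_range, Set.mem_Iio]
      by_contra h
      exact absurd hk (not_le.2 (hN k (le_of_not_gt h)))
    set Bf : Finset ℕ := (hBfin.toFinset.filter (fun k => k ∉ A)) with hBf
    have hδ : ∃ δ > 0, ∀ k ∈ Bf, δ ≤ dist c⁻¹ (a k)⁻¹ := by
      rcases Bf.eq_empty_or_nonempty with h | h
      · exact ⟨1, one_pos, by simp [h]⟩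
      · obtain ⟨k₀, hk₀, hk₀min⟩ := Bf.exists_min_image (fun k => dist c⁻¹ (a k)⁻¹) h
        refine ⟨dist c⁻¹ (a k₀)⁻¹, ?_, hk₀min⟩
        have hk₀' : k₀ ∈ hBfin.toFinset ∧ k₀ ∉ A := by
          simpa [hBf, Finset.mem_filter] using hk₀
        have hne : a k₀ ≠ 0 := by
          intro h0
          have := hBfin.mem_toFinset.1 hk₀'.1
          simp only [Set.mem_setOf_eq, h0, norm_zero] at this
          linarith
        have hac : a k₀ ≠ c := fun h => hk₀'.2 ((hmemA k₀).2 h)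
        have hinv : (a k₀)⁻¹ ≠ c⁻¹ := fun h => hac (inv_injective h)
        rw [gt_iff_lt, dist_pos]
        exact fun h => hinv h.symm
    obtain ⟨δ, hδpos, hδle⟩ := hδ
    refine ⟨min (1/4) (‖c‖ * δ / 4), by positivity, min (δ/2) (1/(2*‖c‖)), by positivity, ?_⟩
    intro k hkA w hw
    by_cases hbig : ‖c‖ / 2 ≤ ‖a k‖
    · have hkB : k ∈ Bf := by
        rw [hBf, Finset.mem_filter, hBfin.mem_toFinset]
        exact ⟨hbig, hkA⟩
      have hane : a k ≠ 0 := by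
        intro h0; rw [h0, norm_zero] at hbig; linarith
      have hfac : 1 - a k * w = a k * ((a k)⁻¹ - w) := by
        field_simp
      have h1 : ‖1 - a k * w‖ = ‖a k‖ * dist w (a k)⁻¹ := by
        rw [hfac, norm_mul, dist_comm, dist_eq_norm]
      have h2 : δ ≤ dist c⁻¹ (a k)⁻¹ := hδle k hkB
      have h3 : dist c⁻¹ (a k)⁻¹ ≤ dist c⁻¹ w + dist w (a k)⁻¹ := dist_triangle _ _ _
      have h4 : dist c⁻¹ w ≤ δ / 2 := by
        rw [dist_comm]; exact hw.trans (min_le_left _ _)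
      have h5 : δ / 2 ≤ dist w (a k)⁻¹ := by linarith
      calc min (1/4) (‖c‖ * δ / 4) ≤ ‖c‖ * δ / 4 := min_le_right _ _
        _ ≤ ‖a k‖ * dist w (a k)⁻¹ := by
            have := mul_le_mul hbig h5 (by positivity) (norm_nonneg _)
            calc ‖c‖ * δ / 4 = ‖c‖/2 * (δ/2) := by ring
              _ ≤ ‖a k‖ * dist w (a k)⁻¹ := this
        _ = ‖1 - a k * w‖ := h1.symm
    · push_neg at hbig
      have hwnorm : ‖w‖ ≤ 3 / (2 * ‖c‖) := by
        have h1 : ‖w‖ ≤ ‖(c:ℂ)⁻¹‖ + dist w c⁻¹ := by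
          rw [dist_eq_norm]
          calc ‖w‖ = ‖(w - c⁻¹) + c⁻¹‖ := by ring_nf
            _ ≤ ‖w - c⁻¹‖ + ‖(c:ℂ)⁻¹‖ := norm_add_le _ _
            _ = ‖(c:ℂ)⁻¹‖ + ‖w - c⁻¹‖ := by ring
        have h2 : ‖(c:ℂ)⁻¹‖ = 1 / ‖c‖ := by rw [norm_inv]; ring
        have h3 : dist w c⁻¹ ≤ 1/(2*‖c‖) := hw.trans (min_le_right _ _)
        rw [h2] at h1
        calc ‖w‖ ≤ 1/‖c‖ + dist w c⁻¹ := h1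
          _ ≤ 1/‖c‖ + 1/(2*‖c‖) := by linarith
          _ = 3/(2*‖c‖) := by field_simp; ring
      have haw : ‖a k * w‖ ≤ 3/4 := by
        rw [norm_mul]
        calc ‖a k‖ * ‖w‖ ≤ (‖c‖/2) * (3/(2*‖c‖)) := by
              apply mul_le_mul hbig.le hwnorm (norm_nonneg _) (by positivity)
          _ = 3/4 := by
              rw [div_mul_div_comm]
              rw [div_eq_div_iff (by positivity) (by norm_num)]
              ring
      have hlow : (1:ℝ) - 3/4 ≤ ‖1 - a k * w‖ := by
        have := norm_sub_norm_le (1 : ℂ) (a k * w)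
        simp only [norm_one] at this
        linarith
      calc min (1/4) (‖c‖ * δ / 4) ≤ 1/4 := min_le_left _ _
        _ ≤ ‖1 - a k * w‖ := by linarith
  -- the auxiliary series
  set g : ℂ → ℕ → ℂ := fun w k => a k ^ 2 / (1 - a k * w) with hgdef
  -- summability and value of F
  have hgsum : ∀ w : ℂ, (∀ k, a k * w ≠ 1) → Summable (fun k => ‖g w k‖) := by
    intro w hw
    have hev : ∀ᶠ k in atTop, ‖a k * w‖ ≤ 1/2 := by
      have h0 : Tendsto (fun k => a k * w) atTop (𝓝 0) := by
        simpa using ha0.mul_const w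
      have := (by simpa using h0.norm : Tendsto (fun k => ‖a k * w‖) atTop
        (𝓝 0)).eventually_le_const (by norm_num : (0:ℝ) < 1/2)
      simpa using this
    apply Summable.of_norm_bounded_eventually_nat (g := fun k => 2 * ‖a k‖^2) (hasq.mul_left 2)
    filter_upwards [hev] with k hk
    rw [norm_norm, hgdef, norm_div, norm_pow]
    have h1 : (1:ℝ)/2 ≤ ‖1 - a k * w‖ := by
      have := norm_sub_norm_le (1:ℂ) (a k * w)
      simp only [norm_one] at this
      linarith
    rw [div_le_iff₀ (by linarith)]
    calc ‖a k‖^2 = 2 * ‖a k‖^2 * (1/2) := by ring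
      _ ≤ 2 * ‖a k‖^2 * ‖1 - a k * w‖ := by
          apply mul_le_mul_of_nonneg_left h1 (by positivity)
  have hFval : ∀ w : ℂ, (∀ k, a k * w ≠ 1) → F w = S + w * ∑' k, g w k := by
    intro w hw
    have hne : ∀ k, 1 - a k * w ≠ 0 := fun k => sub_ne_zero_of_ne (Ne.symm (hw k))
    have hid : ∀ N, ∑ k ∈ Finset.range N, a k / (1 - a k * w)
        = (∑ k ∈ Finset.range N, a k) + w * ∑ k ∈ Finset.range N, g w k := by
      intro N
      rw [Finset.mul_sum, ← Finset.sum_add_distrib]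
      apply Finset.sum_congr rfl
      intro k _
      rw [hgdef]
      field_simp [hne k]
      ring
    have htend : Tendsto (fun N => ∑ k ∈ Finset.range N, a k / (1 - a k * w)) atTop
        (𝓝 (S + w * ∑' k, g w k)) := by
      simp only [hid]
      exact hS.add (tendsto_const_nhds.mul ((hgsum w hw).of_norm.hasSum.tendsto_sum_nat))
    exact tendsto_nhds_unique (hF w hw) htend
  -- the tail sum
  set T : ℂ → ℂ := fun w => ∑' (x : ↑((A : Set ℕ))ᶜ), g w ↑x with hTdef
  set B : ℝ := ∑' k, ‖a k‖^2 / ε with hB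
  have hM : Summable (fun k => ‖a k‖^2 / ε) := hasq.div_const ε
  have hTbound : ∀ w : ℂ, (∀ k, a k * w ≠ 1) → dist w c⁻¹ ≤ r → ‖T w‖ ≤ B := by
    intro w hw hwr
    have hsum := hgsum w hw
    have h1 : ‖T w‖ ≤ ∑' (x : ↑((A : Set ℕ))ᶜ), ‖g w ↑x‖ :=
      norm_tsum_le_tsum_norm (hsum.subtype _)
    have h2 : ∑' (x : ↑((A : Set ℕ))ᶜ), ‖g w ↑x‖
        ≤ ∑' (x : ↑((A : Set ℕ))ᶜ), ‖a (↑x:ℕ)‖^2 / ε := by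
      apply Summable.tsum_le_tsum _ (hsum.subtype _) (hM.subtype _)
      rintro ⟨k, hk⟩
      have hkA : k ∉ A := by simpa using hk
      have hlb := hbound k hkA w hwr
      simp only [hgdef, norm_div, norm_pow]
      exact div_le_div_of_nonneg_left (by positivity) hε hlb
    have h3 : ∑' (x : ↑((A : Set ℕ))ᶜ), ‖a (↑x:ℕ)‖^2 / ε ≤ B :=
      Summable.tsum_subtype_le _ _ (fun k => by positivity) hM
    exact h1.trans (h2.trans h3)
  -- the algebraic identity along the sequence
  have hident : ∀ n, (1 - c * z n) * F (z n)
      = (1 - c * z n) * S + (c^2 * m) * z n + ((1 - c * z n) * z n) * T (z n) := by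
    intro n
    have hw := hzp n
    rw [hFval (z n) hw]
    have hsplit : ∑' k, g (z n) k = (∑ k ∈ A, g (z n) k) + T (z n) :=
      (Summable.sum_add_tsum_compl (hgsum (z n) hw).of_norm).symm
    have hAsum : ∑ k ∈ A, g (z n) k = (m : ℂ) * (c^2 / (1 - c * z n)) := by
      rw [show ∑ k ∈ A, g (z n) k = ∑ _k ∈ A, c^2 / (1 - c * z n) from
        Finset.sum_congr rfl fun k hk => by simp only [hgdef, (hmemA k).1 hk],
        Finset.sum_const, nsmul_eq_mul, hm]
    rw [hsplit, hAsum]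
    rcases A.eq_empty_or_nonempty with hA0 | ⟨k₀, hk₀⟩
    · have : m = 0 := by rw [hm, hA0, Finset.card_empty]
      rw [this]
      push_cast
      ring
    · have hcz : c * z n ≠ 1 := by
        have := hw k₀
        rwa [(hmemA k₀).1 hk₀] at this
      have hu : 1 - c * z n ≠ 0 := sub_ne_zero_of_ne (Ne.symm hcz)
      field_simp
      ring
  -- pass to the limit
  have hevr : ∀ᶠ n in atTop, dist (z n) c⁻¹ ≤ r := by
    have : Metric.closedBall (c⁻¹ : ℂ) r ∈ 𝓝 (c⁻¹ : ℂ) := Metric.closedBall_mem_nhds _ hr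
    exact hz this
  have hu0 : Tendsto (fun n => 1 - c * z n) atTop (𝓝 0) := by
    have h1 : Tendsto (fun n => 1 - c * z n) atTop (𝓝 (1 - c * c⁻¹)) :=
      tendsto_const_nhds.sub (tendsto_const_nhds.mul hz)
    rwa [mul_inv_cancel₀ hc, sub_self] at h1
  have t1 : Tendsto (fun n => (1 - c * z n) * S) atTop (𝓝 0) := by
    simpa using hu0.mul_const S
  have t2 : Tendsto (fun n => (c^2 * m) * z n) atTop (𝓝 (c * m)) := by
    have h1 : Tendsto (fun n => (c^2 * (m:ℂ)) * z n) atTop (𝓝 ((c^2 * m) * c⁻¹)) :=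
      tendsto_const_nhds.mul hz
    have : (c^2 * (m:ℂ)) * c⁻¹ = c * m := by
      field_simp
    rwa [this] at h1
  have t3 : Tendsto (fun n => ((1 - c * z n) * z n) * T (z n)) atTop (𝓝 0) := by
    refine squeeze_zero_norm' (a := fun n => ‖1 - c * z n‖ * ‖z n‖ * B) ?_ ?_
    · filter_upwards [hevr] with n hn
      rw [norm_mul, norm_mul]
      apply mul_le_mul_of_nonneg_left (hTbound (z n) (hzp n) hn)
        (by positivity)
    · have h1 : Tendsto (fun n => ‖1 - c * z n‖ * ‖z n‖ * B) atTop
          (𝓝 (‖(0:ℂ)‖ * ‖(c:ℂ)⁻¹‖ * B)) :=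
        (hu0.norm.mul hz.norm).mul_const B
      simpa using h1
  have := (t1.add t2).add t3
  rw [zero_add, add_zero] at this
  rw [hcard]
  apply this.congr
  intro n
  rw [hident n]

/-- Lemma 4.1 (final part): the limit function `z ↦ ∑ a_k / (1 - a_k z)` determines the
non-zero terms of the sequence together with their multiplicities. -/
theorem stmt_2 (a b : ℕ → ℂ)
    (haconv : ∃ S : ℂ, Tendsto (fun N => ∑ k ∈ Finset.range N, a k) atTop (𝓝 S))
    (hbconv : ∃ S : ℂ, Tendsto (fun N => ∑ k ∈ Finset.range N, b k) atTop (𝓝 S))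
    (hasq : Summable fun k => ‖a k‖ ^ 2)
    (hbsq : Summable fun k => ‖b k‖ ^ 2)
    (F G : ℂ → ℂ)
    (hF : ∀ z : ℂ, (∀ k, a k * z ≠ 1) →
      Tendsto (fun N => ∑ k ∈ Finset.range N, a k / (1 - a k * z)) atTop (𝓝 (F z)))
    (hG : ∀ z : ℂ, (∀ k, b k * z ≠ 1) →
      Tendsto (fun N => ∑ k ∈ Finset.range N, b k / (1 - b k * z)) atTop (𝓝 (G z)))
    (heq : ∀ z : ℂ, (∀ k, a k * z ≠ 1) → (∀ k, b k * z ≠ 1) → F z = G z) :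
    ∀ c : ℂ, c ≠ 0 → Nat.card {k : ℕ | a k = c} = Nat.card {k : ℕ | b k = c} := by
  intro c hc
  -- the countable set of potential poles
  set P : Set ℂ := Set.range (fun k => (a k)⁻¹) ∪ Set.range (fun k => (b k)⁻¹) with hP
  have hPc : P.Countable := (Set.countable_range _).union (Set.countable_range _)
  have hdense : Dense Pᶜ := hPc.dense_compl ℂ
  -- choose a sequence approaching c⁻¹ avoiding all poles
  have hch : ∀ n : ℕ, ∃ w : ℂ, w ∈ Pᶜ ∧ dist w c⁻¹ < 1/(n+1) := by
    intro n
    have := Metric.mem_closure_iff.1 (hdense (c⁻¹ : ℂ)) (1/(n+1)) (by positivity)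
    obtain ⟨w, hw1, hw2⟩ := this
    exact ⟨w, hw1, by rwa [dist_comm]⟩
  choose z hzP hzd using hch
  have hz : Tendsto z atTop (𝓝 c⁻¹) := by
    rw [tendsto_iff_dist_tendsto_zero]
    apply squeeze_zero (fun n => dist_nonneg) (fun n => (hzd n).le)
    exact tendsto_one_div_add_atTop_nhds_zero_nat
  have hzpa : ∀ n k, a k * z n ≠ 1 := by
    intro n k h
    have hak : a k ≠ 0 := by intro h0; rw [h0] at h; simp at h
    have : z n = (a k)⁻¹ := by
      field_simp
      linear_combination h
    exact hzP n (by rw [hP]; exact Or.inl ⟨k, this.symm⟩)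
  have hzpb : ∀ n k, b k * z n ≠ 1 := by
    intro n k h
    have hbk : b k ≠ 0 := by intro h0; rw [h0] at h; simp at h
    have : z n = (b k)⁻¹ := by
      field_simp
      linear_combination h
    exact hzP n (by rw [hP]; exact Or.inr ⟨k, this.symm⟩)
  have hta := key_lemma a haconv hasq F hF c hc z hz hzpa
  have htb := key_lemma b hbconv hbsq G hG c hc z hz hzpb
  have hfg : (fun n => (1 - c * z n) * F (z n)) = fun n => (1 - c * z n) * G (z n) := by
    funext n
    rw [heq (z n) (hzpa n) (hzpb n)]
  rw [hfg] at hta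
  have := tendsto_nhds_unique hta htb
  have h2 : (Nat.card {k : ℕ | a k = c} : ℂ) = Nat.card {k : ℕ | b k = c} :=
    mul_left_cancel₀ hc this
  exact_mod_cast h2
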